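/- Let 𝓑 be a simple expansion set over X, let 𝒞(v₁,v₂) and 𝒞(v₁',v₂') be cubes with nonempty intersection, and let v̂ be a vertex of minimal cardinality in 𝒞(v₁,v₂) ∩ 𝒞(v₁',v₂'), written v̂ = (v₁ − ṽ₂) ∪ ⋃_{b ∈ ṽ₂} Bas(b) = (v₁' − ṽ₂') ∪ ⋃_{b' ∈ ṽ₂'} Bas(b') with ṽ₂ ⊆ v₂ and ṽ₂' ⊆ v₂'. Then ṽ₂ ∩ ṽ₂' = ∅. -/
import Mathlib


structure SimpleExpansionSet (B : Type*) (X : Type*) where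
  supp : B → Set X
  supp_nonempty : ∀ b, (supp b).Nonempty
  E : B → Set (Finset B)
  self_mem : ∀ b, ({b} : Finset B) ∈ E b
  proper_unique : ∀ b : B, ∀ u ∈ E b, ∀ w ∈ E b, u ≠ {b} → w ≠ {b} → u = w
  proper_disjoint : ∀ b : B, ∀ v ∈ E b, v ≠ {b} →
    ∀ b₁ ∈ v, ∀ b₂ ∈ v, b₁ ≠ b₂ → Disjoint (supp b₁) (supp b₂)
  proper_supp : ∀ b : B, ∀ v ∈ E b, v ≠ {b} → (⋃ b' ∈ v, supp b') = supp b
  proper_card : ∀ b : B, ∀ v ∈ E b, v ≠ {b} → 2 ≤ v.card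

namespace SimpleExpansionSet

variable {B X : Type*}

/-- A vertex: a finite subset of `𝓑` whose members have pairwise disjoint supports. -/
def IsVertex (S : SimpleExpansionSet B X) (v : Finset B) : Prop :=
  ∀ b₁ ∈ v, ∀ b₂ ∈ v, b₁ ≠ b₂ → Disjoint (S.supp b₁) (S.supp b₂)

/-- The support of a vertex. -/
def vsupp (S : SimpleExpansionSet B X) (v : Finset B) : Set X :=
  ⋃ b ∈ v, S.supp b

/-- `|ℰ(b)| = 2`, i.e. `b` admits a proper expansion. -/
def HasExpansion (S : SimpleExpansionSet B X) (b : B) : Prop :=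
  ∃ u ∈ S.E b, u ≠ {b}

/-- The contraction basin of `b`: the unique member of `ℰ(b) - {{b}}` (when it exists). -/
noncomputable def Bas (S : SimpleExpansionSet B X) (b : B) : Finset B :=
  @dite _ (S.HasExpansion b) (Classical.propDecidable _) (fun h => h.choose) (fun _ => {b})

/-- The restriction `r_b(u) = {b' ∈ u : supp b' ⊆ supp b}`. -/
noncomputable def restrict (S : SimpleExpansionSet B X) (b : B) (u : Finset B) : Finset B :=
  @Finset.filter _ (fun b' => S.supp b' ⊆ S.supp b) (Classical.decPred _) u

/-- The partial order on `ℰ(b)`: `{b}` is below everything. -/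
def Eleq (b : B) (u w : Finset B) : Prop := u = w ∨ u = {b}

/-- The cube `𝒞(v₁, v₂)`, as a set of vertices. -/
noncomputable def cube [DecidableEq B] (S : SimpleExpansionSet B X) (v₁ v₂ : Finset B) :
    Set (Finset B) :=
  { u | ∃ w ⊆ v₂, u = (v₁ \ v₂) ∪ (v₂ \ w) ∪ w.biUnion S.Bas }

/-- One expansion step: replace `b ∈ u` by its contraction basin. -/
def Step [DecidableEq B] (S : SimpleExpansionSet B X) (u v : Finset B) : Prop :=
  ∃ b ∈ u, S.HasExpansion b ∧ v = u.erase b ∪ S.Bas b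

/-- The ascending-path relation `⪯`. -/
def Prec [DecidableEq B] (S : SimpleExpansionSet B X) : Finset B → Finset B → Prop :=
  Relation.ReflTransGen (S.Step)

/-- `u` is joined to `v` by a cubical edge with basin `Bsn` (relative to `v`). -/
def BasinOf [DecidableEq B] (S : SimpleExpansionSet B X) (v u Bsn : Finset B) : Prop :=
  (∃ b ∈ v, S.HasExpansion b ∧ u = v.erase b ∪ S.Bas b ∧ Bsn = {b}) ∨
  (∃ b ∈ u, S.HasExpansion b ∧ v = u.erase b ∪ S.Bas b ∧ Bsn = S.Bas b)

end SimpleExpansionSet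

open SimpleExpansionSet

section Aux

variable {B X : Type*}

lemma bas_spec (S : SimpleExpansionSet B X) {b : B} (h : S.HasExpansion b) :
    S.Bas b ∈ S.E b ∧ S.Bas b ≠ ({b} : Finset B) := by
  unfold SimpleExpansionSet.Bas
  rw [dif_pos h]
  exact ⟨h.choose_spec.1, h.choose_spec.2⟩

lemma supp_bas_subset (S : SimpleExpansionSet B X) {b c : B} (h : S.HasExpansion b)
    (hc : c ∈ S.Bas b) : S.supp c ⊆ S.supp b := by
  obtain ⟨h1, h2⟩ := bas_spec S h
  rw [← S.proper_supp b _ h1 h2]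
  exact Set.subset_biUnion_of_mem hc

lemma notmem_bas (S : SimpleExpansionSet B X) {v₁ tv₂ : Finset B} [DecidableEq B]
    (hv₁ : S.IsVertex v₁) (hsub : tv₂ ⊆ v₁) (hexp : ∀ b ∈ tv₂, S.HasExpansion b)
    {b : B} (hb : b ∈ tv₂) {a : B}
    (ha : a ∈ (v₁ \ tv₂) ∪ (tv₂.erase b).biUnion S.Bas) : a ∉ S.Bas b := by
  intro hab
  have hsab : S.supp a ⊆ S.supp b := supp_bas_subset S (hexp b hb) hab
  obtain ⟨x, hx⟩ := S.supp_nonempty a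
  rcases Finset.mem_union.1 ha with h | h
  · rw [Finset.mem_sdiff] at h
    have hne : a ≠ b := fun he => h.2 (he ▸ hb)
    have hd := hv₁ a h.1 b (hsub hb) hne
    exact Set.disjoint_left.1 hd hx (hsab hx)
  · obtain ⟨c, hc, hac⟩ := Finset.mem_biUnion.1 h
    rw [Finset.mem_erase] at hc
    have hsac : S.supp a ⊆ S.supp c := supp_bas_subset S (hexp c hc.2) hac
    have hd := hv₁ c (hsub hc.2) b (hsub hb) hc.1
    exact Set.disjoint_left.1 hd (hsac hx) (hsab hx)

end Aux

/-- with `v̂` a minimal vertex of the intersection of two cubes, written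
`v̂ = (v₁ − ṽ₂) ∪ ⋃ Bas = (v₁' − ṽ₂') ∪ ⋃ Bas`, one has `ṽ₂ ∩ ṽ₂' = ∅`. -/
theorem minimal_vertex_tildes_disjoint {B X : Type*} [DecidableEq B]
    (S : SimpleExpansionSet B X) (v₁ v₂ v₁' v₂' : Finset B)
    (hv₁ : S.IsVertex v₁) (hv₁' : S.IsVertex v₁')
    (hsub : v₂ ⊆ v₁) (hsub' : v₂' ⊆ v₁')
    (hexp : ∀ b ∈ v₂, S.HasExpansion b) (hexp' : ∀ b ∈ v₂', S.HasExpansion b)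
    (vhat tv₂ tv₂' : Finset B)
    (hvhat : vhat ∈ S.cube v₁ v₂ ∩ S.cube v₁' v₂')
    (hmin : ∀ u ∈ S.cube v₁ v₂ ∩ S.cube v₁' v₂', vhat.card ≤ u.card)
    (htv : tv₂ ⊆ v₂) (htv' : tv₂' ⊆ v₂')
    (hrep : vhat = (v₁ \ tv₂) ∪ tv₂.biUnion S.Bas)
    (hrep' : vhat = (v₁' \ tv₂') ∪ tv₂'.biUnion S.Bas) :
    tv₂ ∩ tv₂' = ∅ := by
  by_contra h
  obtain ⟨b, hb⟩ := Finset.nonempty_iff_ne_empty.2 h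
  rw [Finset.mem_inter] at hb
  obtain ⟨hb1, hb2⟩ := hb
  have hbv₁ : b ∈ v₁ := hsub (htv hb1)
  have hbv₁' : b ∈ v₁' := hsub' (htv' hb2)
  set A : Finset B := (v₁ \ tv₂) ∪ (tv₂.erase b).biUnion S.Bas with hA
  set A' : Finset B := (v₁' \ tv₂') ∪ (tv₂'.erase b).biUnion S.Bas with hA'
  have hsplit : tv₂.biUnion S.Bas = S.Bas b ∪ (tv₂.erase b).biUnion S.Bas := by
    conv_lhs => rw [← Finset.insert_erase hb1]
    rw [Finset.biUnion_insert]
  have hsplit' : tv₂'.biUnion S.Bas = S.Bas b ∪ (tv₂'.erase b).biUnion S.Bas := by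
    conv_lhs => rw [← Finset.insert_erase hb2]
    rw [Finset.biUnion_insert]
  have hvA : vhat = A ∪ S.Bas b := by
    rw [hrep, hsplit, hA]
    ext x
    simp only [Finset.mem_union]
    tauto
  have hvA' : vhat = A' ∪ S.Bas b := by
    rw [hrep', hsplit', hA']
    ext x
    simp only [Finset.mem_union]
    tauto
  have hexp2 : ∀ c ∈ tv₂, S.HasExpansion c := fun c hc => hexp c (htv hc)
  have hexp2' : ∀ c ∈ tv₂', S.HasExpansion c := fun c hc => hexp' c (htv' hc)
  have hdisjA : Disjoint A (S.Bas b) := by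
    rw [Finset.disjoint_left]
    exact fun a ha => notmem_bas S hv₁ (htv.trans hsub) hexp2 hb1 ha
  have hdisjA' : Disjoint A' (S.Bas b) := by
    rw [Finset.disjoint_left]
    exact fun a ha => notmem_bas S hv₁' (htv'.trans hsub') hexp2' hb2 ha
  have hAA' : A = A' := by
    ext x
    constructor
    · intro hx
      have hxv : x ∈ A' ∪ S.Bas b := by rw [← hvA', hvA]; exact Finset.mem_union_left _ hx
      rcases Finset.mem_union.1 hxv with h' | h'
      · exact h'
      · exact absurd h' (Finset.disjoint_left.1 hdisjA hx)
    · intro hx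
      have hxv : x ∈ A ∪ S.Bas b := by rw [← hvA, hvA']; exact Finset.mem_union_left _ hx
      rcases Finset.mem_union.1 hxv with h' | h'
      · exact h'
      · exact absurd h' (Finset.disjoint_left.1 hdisjA' hx)
  have hu : insert b A ∈ S.cube v₁ v₂ := by
    refine ⟨tv₂.erase b, (Finset.erase_subset _ _).trans htv, ?_⟩
    ext x
    simp only [hA, Finset.mem_insert, Finset.mem_union, Finset.mem_sdiff, Finset.mem_erase]
    have h1 := @htv x
    have h2 := @hsub x
    by_cases hxb : x = b
    · subst hxb; simp [htv hb1, hbv₁]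
    · tauto
  have hu' : insert b A ∈ S.cube v₁' v₂' := by
    refine ⟨tv₂'.erase b, (Finset.erase_subset _ _).trans htv', ?_⟩
    rw [hAA']
    ext x
    simp only [hA', Finset.mem_insert, Finset.mem_union, Finset.mem_sdiff, Finset.mem_erase]
    have h1 := @htv' x
    have h2 := @hsub' x
    by_cases hxb : x = b
    · subst hxb; simp [htv' hb2, hbv₁']
    · tauto
  have hbas := bas_spec S (hexp b (htv hb1))
  have h2le : 2 ≤ (S.Bas b).card := S.proper_card b _ hbas.1 hbas.2
  have hcard : vhat.card = A.card + (S.Bas b).card := by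
    rw [hvA, Finset.card_union_of_disjoint hdisjA]
  have hle := hmin (insert b A) ⟨hu, hu'⟩
  have hins : (insert b A).card ≤ A.card + 1 := Finset.card_insert_le _ _
  omega
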